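/- For every even integer n ≥ 12, the restricted size Ramsey number satisfies r*(P_3, P_n) ≤ 2n − 3; that is, there exists a simple graph F on n vertices with 2n − 3 edges such that F → (P_3, P_n). -/

import Mathlib

open SimpleGraph

/-- `F` contains a copy of `G` (an injective graph homomorphism from `G` to `F`). -/
def Contains {α β : Type*} (F : SimpleGraph α) (G : SimpleGraph β) : Prop :=
  ∃ f : G →g F, Function.Injective f

/-- `F → (G, H)`: for every red/blue coloring of the edges of `F` (given by the spanning
subgraph `R ≤ F` of red edges, the other edges of `F` being blue), there is a red copy of `G`
or a blue copy of `H`. -/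
def Arrows {α β γ : Type*} (F : SimpleGraph α) (G : SimpleGraph β) (H : SimpleGraph γ) : Prop :=
  ∀ R : SimpleGraph α, R ≤ F → Contains R G ∨ Contains (F \ R) H

namespace Stmt6

/-- Directed edge relation for the host graph: consecutive, distance-2 chords except (0,2),
and the wrap edge (0, n-1). -/
def Q (n a b : ℕ) : Prop :=
  b = a + 1 ∨ (b = a + 2 ∧ 1 ≤ a) ∨ (a = 0 ∧ b = n - 1 ∧ 12 ≤ n)

def Ed (n a b : ℕ) : Prop := Q n a b ∨ Q n b a

/-- The host graph `F` on `Fin n`. -/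
def FG (n : ℕ) : SimpleGraph (Fin n) where
  Adj i j := Ed n i.val j.val
  symm := by constructor; intro i j h; unfold Ed at *; tauto
  loopless := by
    constructor
    intro i h
    have := i.isLt
    unfold Ed Q at h
    omega

/-- The core greedy/jump lemma: along an injectively embedded interval `f 0, …, f d`
with consecutive edges and distance-2 chords present, avoiding a red matching whose
last consecutive edge is not red, there is a Hamiltonian path starting at `f 0`. -/
lemma core {Ed' Red : ℕ → ℕ → Prop}
    (hsymE : ∀ x y, Ed' x y → Ed' y x)
    (hsymR : ∀ x y, Red x y → Red y x)
    (hmatch : ∀ x y z, Red x y → Red x z → y = z) :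
    ∀ d (f : ℕ → ℕ), (∀ i j, i ≤ d → j ≤ d → f i = f j → i = j) →
    (∀ k, k < d → Ed' (f k) (f (k+1))) →
    (∀ k, k + 2 ≤ d → Ed' (f k) (f (k+2))) →
    (1 ≤ d → ¬ Red (f (d-1)) (f d)) →
    ∃ L : List ℕ, List.Chain' (fun a b => Ed' a b ∧ ¬ Red a b) (f 0 :: L) ∧
      (f 0 :: L).Perm ((List.range (d+1)).map f) := by
  intro d
  induction d using Nat.strong_induction_on with
  | _ d IH =>
    intro f hinj hcons hchord hlast
    rcases Nat.eq_zero_or_pos d with hd0 | hd1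
    · subst hd0
      exact ⟨[], List.isChain_singleton _, by simp [List.range_succ]⟩
    by_cases hR : Red (f 0) (f 1)
    · -- jump case
      have hd2 : 2 ≤ d := by
        by_contra h
        have hd : d = 1 := by omega
        subst hd
        exact hlast le_rfl hR
      have nR02 : ¬ Red (f 0) (f 2) := fun h => by
        have h12 := hmatch _ _ _ hR h
        have := hinj 1 2 (by omega) (by omega) h12
        omega
      have nR21 : ¬ Red (f 2) (f 1) := fun h => by
        have h02 := hmatch _ _ _ (hsymR _ _ hR) (hsymR _ _ h)
        have := hinj 0 2 (by omega) (by omega) h02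
        omega
      rcases eq_or_lt_of_le hd2 with hd2' | hd3
      · -- d = 2
        refine ⟨[f 2, f 1], ?_, ?_⟩
        · refine List.IsChain.cons_cons ⟨hchord 0 (by omega), nR02⟩ ?_
          exact List.IsChain.cons_cons ⟨hsymE _ _ (hcons 1 (by omega)), nR21⟩
            (List.isChain_singleton _)
        · have er : (List.range (d+1)).map f = [f 0, f 1, f 2] := by
            rw [← hd2']
            simp [List.range_succ]
          rw [er]
          exact List.Perm.cons _ (List.Perm.swap (f 1) (f 2) [])
      · -- 3 ≤ d
        have nR13 : ¬ Red (f 1) (f 3) := fun h => by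
          have h03 := hmatch _ _ _ (hsymR _ _ hR) h
          have := hinj 0 3 (by omega) (by omega) h03
          omega
        obtain ⟨L', hchain', hperm'⟩ := IH (d-3) (by omega) (fun k => f (k+3))
          (fun i j hi hj h => by
            have := hinj (i+3) (j+3) (by omega) (by omega) h; omega)
          (fun k hk => hcons (k+3) (by omega))
          (fun k hk => hchord (k+3) (by omega))
          (fun h1 => by
            show ¬ Red (f (d-3-1+3)) (f (d-3+3))
            have e1 : d-3-1+3 = d-1 := by omega
            have e2 : d-3+3 = d := by omega
            rw [e1, e2]; exact hlast (by omega))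
        refine ⟨f 2 :: f 1 :: f 3 :: L', ?_, ?_⟩
        · refine List.IsChain.cons_cons ⟨hchord 0 (by omega), nR02⟩ ?_
          refine List.IsChain.cons_cons ⟨hsymE _ _ (hcons 1 (by omega)), nR21⟩ ?_
          exact List.IsChain.cons_cons ⟨hchord 1 (by omega), nR13⟩ hchain'
        · have e3 : d + 1 = 3 + (d-3+1) := by omega
          rw [e3, List.range_add, List.map_append, List.map_map]
          have emap : (List.range (d-3+1)).map (f ∘ (3 + ·)) =
              (List.range (d-3+1)).map (fun k => f (k+3)) := by
            apply List.map_congr_left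
            intro x _
            simp [Function.comp, Nat.add_comm]
          rw [emap]
          have hstep : (f 0 :: f 2 :: f 1 :: f 3 :: L').Perm
              (f 0 :: f 2 :: f 1 :: ((List.range (d-3+1)).map fun k => f (k+3))) :=
            ((hperm'.cons (f 1)).cons (f 2)).cons (f 0)
          refine hstep.trans ?_
          have er3 : (List.range 3).map f = [f 0, f 1, f 2] := by
            simp [List.range_succ]
          rw [er3]
          show ([f 0, f 2, f 1] ++ _).Perm ([f 0, f 1, f 2] ++ _)
          exact List.Perm.append_right _
            (List.Perm.cons _ (List.Perm.swap (f 1) (f 2) []))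
    · -- step case
      obtain ⟨L', hchain', hperm'⟩ := IH (d-1) (by omega) (fun k => f (k+1))
        (fun i j hi hj h => by
          have := hinj (i+1) (j+1) (by omega) (by omega) h; omega)
        (fun k hk => hcons (k+1) (by omega))
        (fun k hk => hchord (k+1) (by omega))
        (fun h1 => by
          show ¬ Red (f (d-1-1+1)) (f (d-1+1))
          have e1 : d-1-1+1 = d-1 := by omega
          have e2 : d-1+1 = d := by omega
          rw [e1, e2]; exact hlast (by omega))
      refine ⟨f 1 :: L', List.IsChain.cons_cons ⟨hcons 0 (by omega), hR⟩ hchain', ?_⟩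
      have e2 : d - 1 + 1 = d := by omega
      rw [e2] at hperm'
      rw [List.range_succ_eq_map, List.map_cons, List.map_map]
      refine List.Perm.cons _ (hperm'.trans ?_)
      have : (List.range d).map (fun k => f (k+1)) = (List.range d).map (f ∘ Nat.succ) :=
        List.map_congr_left (fun x _ => rfl)
      rw [this]

lemma edsym (n : ℕ) : ∀ x y, Ed n x y → Ed n y x := fun _ _ h => h.elim Or.inr Or.inl

lemma case1 (n : ℕ) (hn : 12 ≤ n) (Red : ℕ → ℕ → Prop)
    (hsymR : ∀ x y, Red x y → Red y x)
    (hmatch : ∀ x y z, Red x y → Red x z → y = z)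
    (hA : ¬ Red 0 1) (hB : ¬ Red (n-2) (n-1)) :
    ∃ L : List ℕ, List.Chain' (fun a b => Ed n a b ∧ ¬ Red a b) L ∧
      L.Perm (List.range n) := by
  obtain ⟨L, hch, hperm⟩ := core (edsym n) hsymR hmatch (n-2) (fun k => k+1)
    (fun i j _ _ h => by have h2 : i + 1 = j + 1 := h; omega)
    (fun k hk => by show Ed n (k+1) (k+1+1); unfold Ed Q; omega)
    (fun k hk => by show Ed n (k+1) (k+2+1); unfold Ed Q; omega)
    (fun _ => by
      show ¬ Red (n-2-1+1) (n-2+1)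
      have e1 : n-2-1+1 = n-2 := by omega
      have e2 : n-2+1 = n-1 := by omega
      rw [e1, e2]; exact hB)
  replace hch : List.Chain' (fun a b => Ed n a b ∧ ¬ Red a b) (1 :: L) := hch
  replace hperm : (1 :: L).Perm ((List.range (n-2+1)).map (fun k => k+1)) := hperm
  have hLtail : L.Perm ((List.range (n-2)).map ((fun k => k+1) ∘ Nat.succ)) := by
    have := hperm.trans (by
      rw [List.range_succ_eq_map, List.map_cons, List.map_map])
    exact this.cons_inv
  have hmemL : ∀ x, x ∈ L ↔ 2 ≤ x ∧ x ≤ n-1 := by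
    intro x
    rw [hLtail.mem_iff]
    simp only [List.mem_map, List.mem_range, Function.comp]
    constructor
    · rintro ⟨a, ha, rfl⟩; omega
    · intro h; exact ⟨x-2, by omega, by omega⟩
  have hndL : L.Nodup := by
    refine hLtail.nodup_iff.mpr ?_
    refine List.Nodup.map_on ?_ List.nodup_range
    intro x hx y hy h
    simp only [List.mem_range] at hx hy
    simp only [Function.comp] at h
    omega
  refine ⟨0 :: 1 :: L, ?_, ?_⟩
  · refine List.IsChain.cons_cons ⟨by unfold Ed Q; omega, hA⟩ hch
  · refine (List.perm_ext_iff_of_nodup ?_ List.nodup_range).mpr ?_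
    · simp only [List.nodup_cons, List.mem_cons, hmemL]
      refine ⟨by omega, by omega, hndL⟩
    · intro a
      simp only [List.mem_cons, hmemL, List.mem_range]
      omega

lemma case2 (n : ℕ) (hn : 12 ≤ n) (Red : ℕ → ℕ → Prop)
    (hsymR : ∀ x y, Red x y → Red y x)
    (hmatch : ∀ x y z, Red x y → Red x z → y = z)
    (hA : ¬ Red 0 (n-1)) (hB : ¬ Red 2 1) :
    ∃ L : List ℕ, List.Chain' (fun a b => Ed n a b ∧ ¬ Red a b) L ∧
      L.Perm (List.range n) := by
  obtain ⟨L, hch, hperm⟩ := core (edsym n) hsymR hmatch (n-2) (fun k => n-1-k)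
    (fun i j hi hj h => by have h2 : n-1-i = n-1-j := h; omega)
    (fun k hk => by show Ed n (n-1-k) (n-1-(k+1)); unfold Ed Q; omega)
    (fun k hk => by show Ed n (n-1-k) (n-1-(k+2)); unfold Ed Q; omega)
    (fun _ => by
      show ¬ Red (n-1-(n-2-1)) (n-1-(n-2))
      have e1 : n-1-(n-2-1) = 2 := by omega
      have e2 : n-1-(n-2) = 1 := by omega
      rw [e1, e2]; exact hB)
  replace hch : List.Chain' (fun a b => Ed n a b ∧ ¬ Red a b) ((n-1) :: L) := hch
  replace hperm : ((n-1) :: L).Perm ((List.range (n-2+1)).map (fun k => n-1-k)) := hperm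
  have hLtail : L.Perm ((List.range (n-2)).map ((fun k => n-1-k) ∘ Nat.succ)) := by
    have := hperm.trans (by
      rw [List.range_succ_eq_map, List.map_cons, List.map_map])
    exact this.cons_inv
  have hmemL : ∀ x, x ∈ L ↔ 1 ≤ x ∧ x ≤ n-2 := by
    intro x
    rw [hLtail.mem_iff]
    simp only [List.mem_map, List.mem_range, Function.comp]
    constructor
    · rintro ⟨a, ha, rfl⟩; omega
    · intro h; exact ⟨n-2-x, by omega, by omega⟩
  have hndL : L.Nodup := by
    refine hLtail.nodup_iff.mpr ?_
    refine List.Nodup.map_on ?_ List.nodup_range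
    intro x hx y hy h
    simp only [List.mem_range] at hx hy
    simp only [Function.comp] at h
    omega
  refine ⟨0 :: (n-1) :: L, ?_, ?_⟩
  · refine List.IsChain.cons_cons ⟨by unfold Ed Q; omega, hA⟩ hch
  · refine (List.perm_ext_iff_of_nodup ?_ List.nodup_range).mpr ?_
    · simp only [List.nodup_cons, List.mem_cons, hmemL]
      refine ⟨by omega, by omega, hndL⟩
    · intro a
      simp only [List.mem_cons, hmemL, List.mem_range]
      omega

lemma case4 (n : ℕ) (hn : 12 ≤ n) (Red : ℕ → ℕ → Prop)
    (hsymR : ∀ x y, Red x y → Red y x)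
    (hmatch : ∀ x y z, Red x y → Red x z → y = z)
    (h12 : Red 1 2) (hNE : Red (n-2) (n-1)) :
    ∃ L : List ℕ, List.Chain' (fun a b => Ed n a b ∧ ¬ Red a b) L ∧
      L.Perm (List.range n) := by
  obtain ⟨L, hch, hperm⟩ := core (edsym n) hsymR hmatch (n-6) (fun k => n-4-k)
    (fun i j hi hj h => by have h2 : n-4-i = n-4-j := h; omega)
    (fun k hk => by show Ed n (n-4-k) (n-4-(k+1)); unfold Ed Q; omega)
    (fun k hk => by show Ed n (n-4-k) (n-4-(k+2)); unfold Ed Q; omega)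
    (fun _ => by
      show ¬ Red (n-4-(n-6-1)) (n-4-(n-6))
      have e1 : n-4-(n-6-1) = 3 := by omega
      have e2 : n-4-(n-6) = 2 := by omega
      rw [e1, e2]
      intro h
      have := hmatch _ _ _ (hsymR _ _ h) (hsymR _ _ h12)
      omega)
  replace hch : List.Chain' (fun a b => Ed n a b ∧ ¬ Red a b) ((n-4) :: L) := hch
  replace hperm : ((n-4) :: L).Perm ((List.range (n-6+1)).map (fun k => n-4-k)) := hperm
  have hLtail : L.Perm ((List.range (n-6)).map ((fun k => n-4-k) ∘ Nat.succ)) := by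
    have := hperm.trans (by
      rw [List.range_succ_eq_map, List.map_cons, List.map_map])
    exact this.cons_inv
  have hmemL : ∀ x, x ∈ L ↔ 2 ≤ x ∧ x ≤ n-5 := by
    intro x
    rw [hLtail.mem_iff]
    simp only [List.mem_map, List.mem_range, Function.comp]
    constructor
    · rintro ⟨a, ha, rfl⟩; omega
    · intro h; exact ⟨n-5-x, by omega, by omega⟩
  have hndL : L.Nodup := by
    refine hLtail.nodup_iff.mpr ?_
    refine List.Nodup.map_on ?_ List.nodup_range
    intro x hx y hy h
    simp only [List.mem_range] at hx hy
    simp only [Function.comp] at h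
    omega
  refine ⟨1 :: 0 :: (n-1) :: (n-3) :: (n-2) :: (n-4) :: L, ?_, ?_⟩
  · refine List.IsChain.cons_cons ⟨by unfold Ed Q; omega, fun h => by
      have := hmatch _ _ _ h h12; omega⟩ ?_
    refine List.IsChain.cons_cons ⟨by unfold Ed Q; omega, fun h => by
      have := hmatch _ _ _ (hsymR _ _ h) (hsymR _ _ hNE); omega⟩ ?_
    refine List.IsChain.cons_cons ⟨by unfold Ed Q; omega, fun h => by
      have := hmatch _ _ _ h (hsymR _ _ hNE); omega⟩ ?_
    refine List.IsChain.cons_cons ⟨by unfold Ed Q; omega, fun h => by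
      have := hmatch _ _ _ (hsymR _ _ h) hNE; omega⟩ ?_
    refine List.IsChain.cons_cons ⟨by unfold Ed Q; omega, fun h => by
      have := hmatch _ _ _ h hNE; omega⟩ hch
  · refine (List.perm_ext_iff_of_nodup ?_ List.nodup_range).mpr ?_
    · simp only [List.nodup_cons, List.mem_cons, hmemL]
      refine ⟨by omega, by omega, by omega, by omega, by omega, by omega, hndL⟩
    · intro a
      simp only [List.mem_cons, hmemL, List.mem_range]
      omega



/-- Main construction: a Hamiltonian listing of `0..n-1` avoiding the red matching. -/
lemma main_list (n : ℕ) (hn : 12 ≤ n) (Red : ℕ → ℕ → Prop)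
    (hsymR : ∀ x y, Red x y → Red y x)
    (hmatch : ∀ x y z, Red x y → Red x z → y = z) :
    ∃ L : List ℕ, List.Chain' (fun a b => Ed n a b ∧ ¬ Red a b) L ∧
      L.Perm (List.range n) := by
  -- case dispatch
  by_cases h01 : Red 0 1
  · -- descending case: ¬Red 0 (n-1), ¬Red 2 1
    refine case2 n hn Red hsymR hmatch ?_ ?_
    · intro h
      have := hmatch _ _ _ h01 h
      omega
    · intro h
      have := hmatch _ _ _ (hsymR _ _ h01) (hsymR _ _ h)
      omega
  · by_cases hNE : Red (n-2) (n-1)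
    · by_cases h12 : Red 1 2
      · exact case4 n hn Red hsymR hmatch h12 hNE
      · refine case2 n hn Red hsymR hmatch ?_ ?_
        · intro h
          have := hmatch _ _ _ (hsymR _ _ h) (hsymR _ _ hNE)
          omega
        · exact fun h => h12 (hsymR _ _ h)
    · exact case1 n hn Red hsymR hmatch h01 hNE


def psi (n : ℕ) (hn : 12 ≤ n) (k : Fin (2*n-3)) : Sym2 (Fin n) :=
  if h : k.val < n-1 then s((⟨k.val, by omega⟩ : Fin n), (⟨k.val+1, by omega⟩ : Fin n))
  else if h2 : k.val < 2*n-4 then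
    s((⟨k.val-(n-2), by have := k.isLt; omega⟩ : Fin n),
      (⟨k.val-(n-2)+2, by have := k.isLt; omega⟩ : Fin n))
  else s((⟨0, by omega⟩ : Fin n), (⟨n-1, by omega⟩ : Fin n))

lemma psi_inj (n : ℕ) (hn : 12 ≤ n) : Function.Injective (psi n hn) := by
  intro a b h
  have ha := a.isLt
  have hb := b.isLt
  unfold psi at h
  split_ifs at h <;>
    simp only [Sym2.eq_iff, Fin.mk.injEq] at h <;>
    exact Fin.ext (by omega)

lemma psi_range (n : ℕ) (hn : 12 ≤ n) :
    (FG n).edgeSet = Set.range (psi n hn) := by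
  have key : ∀ i j : Fin n, Q n i.val j.val → s(i,j) ∈ Set.range (psi n hn) := by
    intro i j hq
    have hi := i.isLt
    have hj := j.isLt
    rcases hq with h | ⟨h, h1⟩ | ⟨h0, hN, _⟩
    · refine ⟨⟨i.val, by omega⟩, ?_⟩
      unfold psi
      rw [dif_pos (show i.val < n-1 by omega)]
      rw [Sym2.eq_iff]
      exact Or.inl ⟨Fin.ext rfl, Fin.ext (show i.val + 1 = j.val by omega)⟩
    · refine ⟨⟨i.val + (n-2), by omega⟩, ?_⟩
      unfold psi
      rw [dif_neg (show ¬ (i.val + (n-2) < n-1) by omega)]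
      rw [dif_pos (show i.val + (n-2) < 2*n-4 by omega)]
      rw [Sym2.eq_iff]
      exact Or.inl ⟨Fin.ext (show i.val + (n-2) - (n-2) = i.val by omega),
        Fin.ext (show i.val + (n-2) - (n-2) + 2 = j.val by omega)⟩
    · refine ⟨⟨2*n-4, by omega⟩, ?_⟩
      unfold psi
      rw [dif_neg (show ¬ (2*n-4 < n-1) by omega)]
      rw [dif_neg (show ¬ (2*n-4 < 2*n-4) by omega)]
      rw [Sym2.eq_iff]
      exact Or.inl ⟨Fin.ext (show (0:ℕ) = i.val by omega),
        Fin.ext (show n-1 = j.val by omega)⟩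
  apply Set.eq_of_subset_of_subset
  · intro e he
    induction e using Sym2.ind with
    | _ i j =>
      rw [SimpleGraph.mem_edgeSet] at he
      rcases he with hq | hq
      · exact key i j hq
      · rw [Sym2.eq_swap]
        exact key j i hq
  · rintro e ⟨k, rfl⟩
    have hk := k.isLt
    unfold psi
    split_ifs with h1 h2
    · rw [SimpleGraph.mem_edgeSet]
      show Ed n k.val (k.val+1)
      unfold Ed Q; omega
    · rw [SimpleGraph.mem_edgeSet]
      show Ed n (k.val-(n-2)) (k.val-(n-2)+2)
      unfold Ed Q; omega
    · rw [SimpleGraph.mem_edgeSet]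
      show Ed n 0 (n-1)
      unfold Ed Q; omega

lemma edgecount (n : ℕ) (hn : 12 ≤ n) : (FG n).edgeSet.ncard = 2*n-3 := by
  rw [psi_range n hn, ← Set.image_univ,
    Set.ncard_image_of_injective _ (psi_inj n hn), Set.ncard_univ]
  simp

end Stmt6

theorem stmt_6 (n : ℕ) (hn : 12 ≤ n) (he : Even n) :
    ∃ F : SimpleGraph (Fin n), F.edgeSet.ncard = 2 * n - 3 ∧
      Arrows F (pathGraph 3) (pathGraph n) := by
  refine ⟨Stmt6.FG n, Stmt6.edgecount n hn, ?_⟩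
  intro R hR
  by_cases hP3 : ∃ a b c : Fin n, a ≠ c ∧ R.Adj a b ∧ R.Adj b c
  · left
    obtain ⟨a, b, c, hac, hab, hbc⟩ := hP3
    have hne1 : a ≠ b := R.ne_of_adj hab
    have hne2 : b ≠ c := R.ne_of_adj hbc
    refine ⟨⟨![a,b,c], ?_⟩, ?_⟩
    · intro u v huv
      rw [pathGraph_adj] at huv
      fin_cases u <;> fin_cases v <;> simp_all <;>
        first
          | exact hab | exact hab.symm | exact hbc | exact hbc.symm | omega
    · intro u v huv
      have huv' : ![a,b,c] u = ![a,b,c] v := huv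
      fin_cases u <;> fin_cases v <;> simp_all
  · right
    set Red : ℕ → ℕ → Prop :=
      fun x y => ∃ (hx : x < n) (hy : y < n), R.Adj ⟨x, hx⟩ ⟨y, hy⟩ with hRed
    have hsymR : ∀ x y, Red x y → Red y x := by
      rintro x y ⟨hx, hy, h⟩
      exact ⟨hy, hx, h.symm⟩
    have hmatch : ∀ x y z, Red x y → Red x z → y = z := by
      rintro x y z ⟨hx, hy, h1⟩ ⟨hx', hz, h2⟩
      by_contra hne
      refine hP3 ⟨⟨y, hy⟩, ⟨x, hx⟩, ⟨z, hz⟩, ?_, h1.symm, h2⟩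
      simp only [ne_eq, Fin.mk.injEq]
      exact hne
    obtain ⟨L, hch, hperm⟩ := Stmt6.main_list n hn Red hsymR hmatch
    have hlen : L.length = n := by rw [hperm.length_eq, List.length_range]
    have hmemlt : ∀ x ∈ L, x < n := fun x hx => List.mem_range.mp (hperm.mem_iff.mp hx)
    have hnd : L.Nodup := hperm.nodup_iff.mpr List.nodup_range
    have hchain : ∀ (i : ℕ) (h : i < L.length - 1),
        Stmt6.Ed n (L.get ⟨i, by omega⟩) (L.get ⟨i+1, by omega⟩) ∧
          ¬ Red (L.get ⟨i, by omega⟩) (L.get ⟨i+1, by omega⟩) :=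
      fun i h => List.isChain_iff_getElem.mp hch i (by omega)
    refine ⟨⟨fun i => ⟨L.get ⟨i.val, by rw [hlen]; exact i.isLt⟩,
      hmemlt _ (List.get_mem _ _)⟩, ?_⟩, ?_⟩
    · intro u v huv
      rw [pathGraph_adj] at huv
      rw [SimpleGraph.sdiff_adj]
      rcases huv with h | h
      · have hu : u.val < L.length - 1 := by
          have := v.isLt; omega
        have hb := hchain u.val hu
        have hidx : (⟨u.val+1, by omega⟩ : Fin L.length) = ⟨v.val, by rw [hlen]; exact v.isLt⟩ :=
          Fin.ext h
        rw [hidx] at hb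
        obtain ⟨hEd, hnR⟩ := hb
        constructor
        · exact hEd
        · intro hadj
          exact hnR ⟨hmemlt _ (List.get_mem _ _), hmemlt _ (List.get_mem _ _), hadj⟩
      · have hv : v.val < L.length - 1 := by
          have := u.isLt; omega
        have hb := hchain v.val hv
        have hidx : (⟨v.val+1, by omega⟩ : Fin L.length) = ⟨u.val, by rw [hlen]; exact u.isLt⟩ :=
          Fin.ext h
        rw [hidx] at hb
        obtain ⟨hEd, hnR⟩ := hb
        constructor
        · exact Stmt6.edsym n _ _ hEd
        · intro hadj
          exact hnR ⟨hmemlt _ (List.get_mem _ _), hmemlt _ (List.get_mem _ _), hadj.symm⟩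
    · intro u v h
      have h2 : L.get ⟨u.val, by rw [hlen]; exact u.isLt⟩ =
          L.get ⟨v.val, by rw [hlen]; exact v.isLt⟩ := by
        have := congrArg Fin.val h
        simpa using this
      have := (hnd.get_inj_iff).mp h2
      have := congrArg Fin.val this
      exact Fin.ext (by simpa using this)
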